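/- For ξ > 0, the amplification factor g(ξ) = ρ_PI(ξ)/(1 - ρ_PI(ξ)) = arctan(ξ)/(ξ - arctan(ξ)) is strictly decreasing on (0, ∞), tends to +∞ as ξ → 0⁺, and tends to 0 as ξ → ∞. -/

import Mathlib

open Real Filter Set

lemma arctan_lt_self {x : ℝ} (hx : 0 < x) : Real.arctan x < x := by
  have h : StrictMonoOn (fun y : ℝ => y - Real.arctan y) (Set.Ici 0) := by
    apply strictMonoOn_of_deriv_pos (convex_Ici 0)
    · exact (continuous_id.sub Real.continuous_arctan).continuousOn
    · intro y hy
      rw [interior_Ici] at hy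
      have : HasDerivAt (fun y : ℝ => y - Real.arctan y) (1 - 1/(1+y^2)) y :=
        (hasDerivAt_id y).sub (Real.hasDerivAt_arctan y)
      rw [this.deriv]
      have h1 : (0:ℝ) < 1 + y^2 := by positivity
      rw [sub_pos, div_lt_one h1]
      nlinarith [hy.out]
  have := h (Set.self_mem_Ici) (Set.mem_Ici.2 hx.le) hx
  simpa [Real.arctan_zero] using this

lemma self_div_lt_arctan {x : ℝ} (hx : 0 < x) : x / (1 + x^2) < Real.arctan x := by
  have h : StrictMonoOn (fun y : ℝ => Real.arctan y - y / (1 + y^2)) (Set.Ici 0) := by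
    apply strictMonoOn_of_deriv_pos (convex_Ici 0)
    · apply Continuous.continuousOn
      exact Real.continuous_arctan.sub (continuous_id.div (by continuity) (fun y => by positivity))
    · intro y hy
      rw [interior_Ici] at hy
      have hd : (0:ℝ) < 1 + y^2 := by positivity
      have h2 : HasDerivAt (fun y : ℝ => y / (1 + y^2))
          ((1*(1+y^2) - y*(2*y)) / (1+y^2)^2) y := by
        have := (hasDerivAt_id' y).div ((hasDerivAt_pow 2 y).const_add 1) hd.ne'
        exact this.congr_deriv (by norm_num)
      have : HasDerivAt (fun y : ℝ => Real.arctan y - y / (1 + y^2))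
          (1/(1+y^2) - (1*(1+y^2) - y*(2*y)) / (1+y^2)^2) y :=
        (Real.hasDerivAt_arctan y).sub h2
      rw [this.deriv]
      rw [div_sub_div _ _ hd.ne' (by positivity), lt_div_iff₀ (by positivity)]
      ring_nf
      nlinarith [hy.out]
  have := h (Set.self_mem_Ici) (Set.mem_Ici.2 hx.le) hx
  simpa [Real.arctan_zero] using this

theorem stmt_10 :
    StrictAntiOn (fun ξ : ℝ => Real.arctan ξ / (ξ - Real.arctan ξ)) (Set.Ioi 0) ∧
    Filter.Tendsto (fun ξ : ℝ => Real.arctan ξ / (ξ - Real.arctan ξ))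
      (nhdsWithin 0 (Set.Ioi 0)) Filter.atTop ∧
    Filter.Tendsto (fun ξ : ℝ => Real.arctan ξ / (ξ - Real.arctan ξ))
      Filter.atTop (nhds 0) := by
  have hpos : ∀ x : ℝ, 0 < x → 0 < x - Real.arctan x := fun x hx =>
    sub_pos.2 (arctan_lt_self hx)
  refine ⟨?_, ?_, ?_⟩
  · apply strictAntiOn_of_deriv_neg (convex_Ioi 0)
    · apply ContinuousOn.div
      · exact Real.continuous_arctan.continuousOn
      · exact (continuous_id.sub Real.continuous_arctan).continuousOn
      · intro x hx; exact (hpos x hx).ne'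
    · intro x hx
      rw [interior_Ioi] at hx
      have hx : (0:ℝ) < x := hx
      have hd : (0:ℝ) < 1 + x^2 := by positivity
      have h1 : HasDerivAt (fun y : ℝ => y - Real.arctan y) (1 - 1/(1+x^2)) x :=
        (hasDerivAt_id x).sub (Real.hasDerivAt_arctan x)
      have h2 : HasDerivAt (fun y : ℝ => Real.arctan y / (y - Real.arctan y))
          ((1/(1+x^2) * (x - Real.arctan x) - Real.arctan x * (1 - 1/(1+x^2)))
            / (x - Real.arctan x)^2) x :=
        (Real.hasDerivAt_arctan x).div h1 (hpos x hx).ne'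
      rw [h2.deriv]
      apply div_neg_of_neg_of_pos _ (pow_pos (hpos x hx) 2)
      have key := self_div_lt_arctan hx
      rw [div_lt_iff₀ hd] at key
      have e : 1/(1+x^2) * (x - Real.arctan x) - Real.arctan x * (1 - 1/(1+x^2))
          = (x - Real.arctan x * (1 + x^2)) / (1 + x^2) := by
        field_simp; ring
      rw [e]
      apply div_neg_of_neg_of_pos _ hd
      nlinarith
  · have hslope : Filter.Tendsto (fun x : ℝ => Real.arctan x / x) (nhdsWithin 0 (Set.Ioi 0)) (nhds 1) := by
      have := hasDerivAt_iff_tendsto_slope.1 (Real.hasDerivAt_arctan 0)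
      simp only [Real.arctan_zero, pow_two, mul_zero, zero_mul, add_zero, div_one] at this
      have h2 : Filter.Tendsto (slope Real.arctan 0) (nhdsWithin 0 (Set.Ioi 0)) (nhds 1) :=
        this.mono_left (nhdsWithin_mono 0 (fun x hx => ne_of_gt hx))
      refine h2.congr (fun x => ?_)
      simp [slope_def_field, div_eq_div_iff]
    have hh : Filter.Tendsto (fun x : ℝ => x / Real.arctan x - 1) (nhdsWithin 0 (Set.Ioi 0))
        (nhdsWithin 0 (Set.Ioi 0)) := by
      rw [tendsto_nhdsWithin_iff]
      constructor
      · have := (hslope.inv₀ one_ne_zero).sub_const 1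
        simpa using this.congr (fun x => by rw [inv_div])
      · filter_upwards [self_mem_nhdsWithin] with x hx
        have hx : (0:ℝ) < x := hx
        have h1 : 0 < Real.arctan x := lt_trans (by positivity) (self_div_lt_arctan hx)
        have := arctan_lt_self hx
        rw [Set.mem_Ioi, sub_pos]
        exact (one_lt_div h1).2 this
    have := hh.inv_tendsto_nhdsGT_zero
    refine this.congr' ?_
    filter_upwards [self_mem_nhdsWithin] with x hx
    have hx : (0:ℝ) < x := hx
    have h1 : 0 < Real.arctan x := lt_trans (by positivity) (self_div_lt_arctan hx)
    simp only [Pi.inv_apply]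
    rw [show x / Real.arctan x - 1 = (x - Real.arctan x) / Real.arctan x by
      field_simp, inv_div]
  · apply Filter.Tendsto.div_atTop (a := Real.pi / 2)
    · exact Real.tendsto_arctan_atTop.mono_right nhdsWithin_le_nhds
    · apply tendsto_atTop_mono (fun x => ?_) (tendsto_atTop_add_const_right _ (-(Real.pi/2)) tendsto_id)
      have := (Real.arctan_lt_pi_div_two x).le
      simp only [id]; linarith
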